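/- Let w̃_1, w̃_2, ṽ_1, ṽ_2 ∈ W(1) and s̃_1, s̃_2 ∈ S^aff(1), and suppose w̃_1 s̃_1 ṽ_1 = w̃_2 s̃_2 ṽ_2 and π(w̃_1 ṽ_1) = π(w̃_2 ṽ_2). Then w̃_1 c_{s̃_1} ṽ_1 = w̃_2 c_{s̃_2} ṽ_2 in the group algebra R[W(1)]. -/

import Mathlib

open scoped Classical

theorem stmt_13
    {R : Type} [CommRing R]
    {W : Type} [Group W] {W1 : Type} [Group W1]
    (pr : W1 →* W) (hpr : Function.Surjective pr)
    (hker_comm : ∀ t t' : W1, t ∈ pr.ker → t' ∈ pr.ker → t * t' = t' * t)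
    (len : W → ℕ) (Saff : Set W) (Om : Subgroup W)
    (hSaff_sq : ∀ s ∈ Saff, s * s = 1)
    (hSaff_len : ∀ s ∈ Saff, len s = 1)
    (hOm : ∀ w : W, w ∈ Om ↔ len w = 0)
    (hOmconj : ∀ τ ∈ Om, ∀ s ∈ Saff, τ * s * τ⁻¹ ∈ Saff)
    (hred : ∀ w : W, ∃ (l : List W) (τ : W), (∀ s ∈ l, s ∈ Saff) ∧ τ ∈ Om ∧
      w = l.prod * τ ∧ l.length = len w)
    (c : W1 → MonoidAlgebra R W1)
    (hcsupp : ∀ st : W1, pr st ∈ Saff → ∀ t ∈ (c st).coeff.support, t ∈ pr.ker)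
    (hct : ∀ st t : W1, pr st ∈ Saff → t ∈ pr.ker →
      c (st * t) = c st * MonoidAlgebra.single t 1)
    (hcconj : ∀ wt st : W1, pr st ∈ Saff → pr (wt * st * wt⁻¹) ∈ Saff →
      c (wt * st * wt⁻¹)
        = MonoidAlgebra.single wt (1 : R) * c st * MonoidAlgebra.single wt⁻¹ 1)
    (wt1 wt2 vt1 vt2 st1 st2 : W1)
    (hs1 : pr st1 ∈ Saff) (hs2 : pr st2 ∈ Saff)
    (heq : wt1 * st1 * vt1 = wt2 * st2 * vt2)
    (hpi : pr (wt1 * vt1) = pr (wt2 * vt2)) :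
    MonoidAlgebra.single wt1 (1 : R) * c st1 * MonoidAlgebra.single vt1 1
      = MonoidAlgebra.single wt2 (1 : R) * c st2 * MonoidAlgebra.single vt2 1 := by

  set w := wt2⁻¹ * wt1 with hw
  set t' := w * vt1 * vt2⁻¹ with ht'def
  have hst2 : st2 = (w * st1 * w⁻¹) * t' := by
    have h : st2 = wt2⁻¹ * (wt1 * st1 * vt1) * vt2⁻¹ := by rw [heq]; group
    rw [h, ht'def, hw]; group
  have ht' : t' ∈ pr.ker := by
    have h : pr wt1 * pr vt1 = pr wt2 * pr vt2 := by simpa [map_mul] using hpi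
    have h2 : pr t' = pr wt2⁻¹ * (pr wt1 * pr vt1) * pr vt2⁻¹ := by
      simp [ht'def, hw, map_mul, mul_assoc]
    rw [MonoidHom.mem_ker, h2, h, map_inv, map_inv]
    group
  have hSconj : pr (w * st1 * w⁻¹) ∈ Saff := by
    have h : pr (w * st1 * w⁻¹) = pr st2 := by
      have h2 := congrArg pr hst2
      rw [map_mul, ht'.out, mul_one] at h2
      exact h2.symm
    rwa [h]
  have hc2 : c st2
      = MonoidAlgebra.single w (1 : R) * c st1 * MonoidAlgebra.single w⁻¹ 1
          * MonoidAlgebra.single t' 1 := by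
    rw [hst2, hct _ _ hSconj ht', hcconj w st1 hs1 hSconj]
  have e1 : MonoidAlgebra.single wt2 (1 : R) * MonoidAlgebra.single w 1
      = MonoidAlgebra.single wt1 1 := by
    rw [MonoidAlgebra.single_mul_single, one_mul]
    congr 1
    rw [hw]; group
  have e2 : MonoidAlgebra.single w⁻¹ (1 : R) * MonoidAlgebra.single t' 1
        * MonoidAlgebra.single vt2 1
      = MonoidAlgebra.single vt1 1 := by
    rw [MonoidAlgebra.single_mul_single, MonoidAlgebra.single_mul_single, one_mul, one_mul]
    congr 1
    rw [ht'def]; group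
  have key : MonoidAlgebra.single wt2 (1 : R) * c st2 * MonoidAlgebra.single vt2 1
      = (MonoidAlgebra.single wt2 (1 : R) * MonoidAlgebra.single w 1) * c st1
        * (MonoidAlgebra.single w⁻¹ (1 : R) * MonoidAlgebra.single t' 1
          * MonoidAlgebra.single vt2 1) := by
    rw [hc2]; simp only [mul_assoc]
  rw [key, e1, e2]
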